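/- (Abstract core of Theorems 2 and 3) Let {Z_ε}_{ε>0} be a family of real random variables and suppose there are constants c > 0, κ₁ > −1/2 and κ₂ ≥ 1 such that (E[|Z_ε|^n])^{1/n} ≤ c·ε^{κ₁}·n^{κ₂} for every integer n ≥ 1 and every ε ∈ (0,1). Then for every α with 0 < α < (1/2 + κ₁)/κ₂, the family {√ε·Z_ε}_{ε>0} is exponentially tight with speed v(ε) = ε^α; that is, lim_{L→∞} limsup_{ε→0⁺} ε^α · log P(√ε·|Z_ε| > L) = −∞. -/

import Mathlib

open MeasureTheory Filter Set

private lemma stmt_11_aux {Ω : Type*} [MeasurableSpace Ω] (P : Measure Ω) [IsProbabilityMeasure P]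
    (c κ₁ κ₂ : ℝ) (hc : 0 < c) (hκ₂ : 1 ≤ κ₂)
    (Z : ℝ → Ω → ℝ) (hmeas : ∀ ε, Measurable (Z ε))
    (hmom : ∀ n : ℕ, 1 ≤ n → ∀ ε ∈ Ioo (0 : ℝ) 1,
      (∫⁻ ω, ENNReal.ofReal (|Z ε ω| ^ (n : ℝ)) ∂P) ^ (1 / (n : ℝ)) ≤
        ENNReal.ofReal (c * ε ^ κ₁ * (n : ℝ) ^ κ₂))
    (α : ℝ) (hα0 : 0 < α) (hβ : 0 < 1/2 + κ₁ - α * κ₂)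
    (ε : ℝ) (hε : ε ∈ Ioo (0:ℝ) 1) (L : ℝ) (hL : c * 2 ^ κ₂ < L) :
    ((ε ^ α : ℝ) : EReal) * ENNReal.log (P {ω | L < Real.sqrt ε * |Z ε ω|}) ≤
      ((Real.log (c * 2 ^ κ₂ / L)) : EReal) := by
  obtain ⟨hε0, hε1⟩ := hε
  set C : ℝ := c * 2 ^ κ₂ with hC
  have hC0 : 0 < C := by positivity
  have hL0 : 0 < L := hC0.trans hL
  have hκ₂0 : (0:ℝ) < κ₂ := lt_of_lt_of_le one_pos hκ₂
  set n : ℕ := ⌈ε ^ (-α)⌉₊ with hn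
  have hx0 : 0 < ε ^ (-α) := Real.rpow_pos_of_pos hε0 _
  have hn1 : 1 ≤ n := Nat.one_le_iff_ne_zero.mpr (by
    simp only [hn, ne_eq, Nat.ceil_eq_zero, not_le]; exact hx0)
  have hnR : (0:ℝ) < n := by exact_mod_cast hn1
  have hεa : 0 < ε ^ α := Real.rpow_pos_of_pos hε0 _
  have hεa1 : ε ^ α ≤ 1 := Real.rpow_le_one hε0.le hε1.le hα0.le
  have hx1 : 1 ≤ ε ^ (-α) := by
    rw [Real.rpow_neg hε0.le]
    nlinarith [mul_inv_cancel₀ hεa.ne', inv_pos.mpr hεa]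
  have htn : 1 ≤ ε ^ α * n := by
    have h1 : ε ^ (-α) ≤ (n:ℝ) := Nat.le_ceil _
    have h2 : ε ^ α * ε ^ (-α) = 1 := by
      rw [← Real.rpow_add hε0]; simp
    nlinarith
  have hn2 : (n:ℝ) ≤ 2 * ε ^ (-α) := by
    have := Nat.ceil_lt_add_one hx0.le
    have h : (n:ℝ) < ε ^ (-α) + 1 := by exact_mod_cast this
    linarith
  have hsq : 0 < Real.sqrt ε := Real.sqrt_pos.mpr hε0
  set R : ℝ := c * ε ^ κ₁ * (n:ℝ) ^ κ₂ with hR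
  have hR0 : 0 < R := by positivity
  set r : ℝ := R * Real.sqrt ε / L with hrdef
  have hr0 : 0 < r := by positivity
  -- moment bound
  have hI : (∫⁻ ω, ENNReal.ofReal (|Z ε ω| ^ (n : ℝ)) ∂P) ≤ ENNReal.ofReal R ^ (n:ℝ) := by
    have h := hmom n hn1 ε ⟨hε0, hε1⟩
    have h2 := ENNReal.rpow_le_rpow h hnR.le
    rwa [← ENNReal.rpow_mul, one_div, inv_mul_cancel₀ hnR.ne', ENNReal.rpow_one] at h2
  -- Markov
  set A := {ω | L < Real.sqrt ε * |Z ε ω|} with hA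
  set a : ENNReal := ENNReal.ofReal ((L / Real.sqrt ε) ^ (n:ℝ)) with ha
  have ha0 : a ≠ 0 := by
    simp only [ha, ne_eq, ENNReal.ofReal_eq_zero, not_le]
    positivity
  have haT : a ≠ ⊤ := ENNReal.ofReal_ne_top
  have hsub : A ⊆ {ω | a ≤ ENNReal.ofReal (|Z ε ω| ^ (n:ℝ))} := by
    intro ω hω
    simp only [hA, mem_setOf_eq] at hω ⊢
    have h1 : L / Real.sqrt ε ≤ |Z ε ω| := by
      rw [div_le_iff₀ hsq]
      linarith [hω]
    exact ENNReal.ofReal_le_ofReal (Real.rpow_le_rpow (by positivity) h1 hnR.le)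
  have hmeasf : AEMeasurable (fun ω => ENNReal.ofReal (|Z ε ω| ^ (n:ℝ))) P :=
    (((hmeas ε).abs.pow measurable_const).ennreal_ofReal).aemeasurable.congr (by
      filter_upwards with ω
      rw [Real.rpow_natCast])
  have hPA : P A ≤ ENNReal.ofReal (r ^ (n:ℝ)) := by
    have hmark : a * P A ≤ ∫⁻ ω, ENNReal.ofReal (|Z ε ω| ^ (n : ℝ)) ∂P := by
      calc a * P A ≤ a * P {ω | a ≤ ENNReal.ofReal (|Z ε ω| ^ (n:ℝ))} :=
            mul_le_mul_right (measure_mono hsub) a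
        _ ≤ _ := mul_meas_ge_le_lintegral₀ hmeasf a
    have hLs : 0 < L / Real.sqrt ε := by positivity
    have heq : r = R / (L / Real.sqrt ε) := by
      rw [hrdef]; field_simp
    rw [heq, Real.div_rpow hR0.le hLs.le, ENNReal.ofReal_div_of_pos (by positivity)]
    rw [ENNReal.le_div_iff_mul_le (Or.inl ha0) (Or.inl haT)]
    calc P A * a = a * P A := mul_comm _ _
      _ ≤ _ := hmark
      _ ≤ ENNReal.ofReal R ^ (n:ℝ) := hI
      _ = ENNReal.ofReal (R ^ (n:ℝ)) := ENNReal.ofReal_rpow_of_pos hR0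
  -- log bound
  have hlog : ENNReal.log (P A) ≤ (((n:ℝ) * Real.log r : ℝ) : EReal) := by
    have h := ENNReal.log_monotone hPA
    rwa [ENNReal.log_ofReal, if_neg (not_le.mpr (Real.rpow_pos_of_pos hr0 _)),
      Real.log_rpow hr0] at h
  -- real-number estimate
  have hrC : r ≤ C / L := by
    have h1 : (n:ℝ) ^ κ₂ ≤ 2 ^ κ₂ * ε ^ (-(α * κ₂)) := by
      calc (n:ℝ) ^ κ₂ ≤ (2 * ε ^ (-α)) ^ κ₂ :=
            Real.rpow_le_rpow (by positivity) hn2 hκ₂0.le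
        _ = 2 ^ κ₂ * (ε ^ (-α)) ^ κ₂ := Real.mul_rpow (by norm_num) hx0.le
        _ = 2 ^ κ₂ * ε ^ (-(α * κ₂)) := by
            rw [← Real.rpow_mul hε0.le, neg_mul]
    have h2 : R * Real.sqrt ε ≤ c * ε ^ κ₁ * (2 ^ κ₂ * ε ^ (-(α * κ₂))) * Real.sqrt ε := by
      apply mul_le_mul_of_nonneg_right _ (Real.sqrt_nonneg _)
      exact mul_le_mul_of_nonneg_left h1 (by positivity)
    have h3 : c * ε ^ κ₁ * (2 ^ κ₂ * ε ^ (-(α * κ₂))) * Real.sqrt ε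
        = C * ε ^ (κ₁ + -(α * κ₂) + 1/2) := by
      rw [Real.sqrt_eq_rpow, Real.rpow_add hε0, Real.rpow_add hε0]; ring
    have h4 : ε ^ (κ₁ + -(α * κ₂) + 1/2) ≤ 1 :=
      Real.rpow_le_one hε0.le hε1.le (by linarith)
    have h5 : R * Real.sqrt ε ≤ C := by
      rw [h3] at h2
      nlinarith
    rw [hrdef, div_le_div_iff₀ hL0 hL0]
    nlinarith
  have hCL1 : C / L < 1 := (div_lt_one hL0).mpr hL
  have hlogr : Real.log r ≤ Real.log (C / L) := Real.log_le_log hr0 hrC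
  have hlogneg : Real.log (C / L) < 0 := Real.log_neg (by positivity) hCL1
  have hreal : ε ^ α * ((n:ℝ) * Real.log r) ≤ Real.log (C / L) := by
    have h1 : ε ^ α * (n:ℝ) * Real.log r ≤ ε ^ α * (n:ℝ) * Real.log (C / L) :=
      mul_le_mul_of_nonneg_left hlogr (by positivity)
    have h2 : ε ^ α * (n:ℝ) * Real.log (C / L) ≤ 1 * Real.log (C / L) :=
      mul_le_mul_of_nonpos_right htn hlogneg.le
    nlinarith
  calc ((ε ^ α : ℝ) : EReal) * ENNReal.log (P A)
      ≤ ((ε ^ α : ℝ) : EReal) * (((n:ℝ) * Real.log r : ℝ) : EReal) :=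
        mul_le_mul_of_nonneg_left hlog (by exact_mod_cast hεa.le)
    _ = ((ε ^ α * ((n:ℝ) * Real.log r) : ℝ) : EReal) := (EReal.coe_mul _ _).symm
    _ ≤ ((Real.log (C / L)) : EReal) := EReal.coe_le_coe_iff.mpr hreal

theorem stmt_11 {Ω : Type*} [MeasurableSpace Ω] (P : Measure Ω) [IsProbabilityMeasure P]
    (c κ₁ κ₂ : ℝ) (hc : 0 < c) (hκ₁ : -(1 / 2 : ℝ) < κ₁) (hκ₂ : 1 ≤ κ₂)
    (Z : ℝ → Ω → ℝ) (hmeas : ∀ ε, Measurable (Z ε))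
    (hmom : ∀ n : ℕ, 1 ≤ n → ∀ ε ∈ Ioo (0 : ℝ) 1,
      (∫⁻ ω, ENNReal.ofReal (|Z ε ω| ^ (n : ℝ)) ∂P) ^ (1 / (n : ℝ)) ≤
        ENNReal.ofReal (c * ε ^ κ₁ * (n : ℝ) ^ κ₂))
    (α : ℝ) (hα0 : 0 < α) (hα : α < (1 / 2 + κ₁) / κ₂) :
    Tendsto (fun L : ℝ =>
        limsup (fun ε : ℝ => ((ε ^ α : ℝ) : EReal) *
            ENNReal.log (P {ω | L < Real.sqrt ε * |Z ε ω|}))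
          (nhdsWithin (0 : ℝ) (Ioi 0))) atTop (nhds (⊥ : EReal)) := by
  have hκ₂0 : (0:ℝ) < κ₂ := lt_of_lt_of_le one_pos hκ₂
  have hβ : 0 < 1/2 + κ₁ - α * κ₂ := by
    have := (lt_div_iff₀ hκ₂0).mp hα
    linarith
  set C : ℝ := c * 2 ^ κ₂ with hC
  have hC0 : 0 < C := by positivity
  rw [EReal.tendsto_nhds_bot_iff_real]
  intro x
  filter_upwards [eventually_gt_atTop C, eventually_gt_atTop (C * Real.exp (-x))]
    with L hL1 hL2
  have hL0 : 0 < L := hC0.trans hL1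
  have hlogx : Real.log (C / L) < x := by
    have hce : C / L < Real.exp x := by
      rw [div_lt_iff₀ hL0]
      have h : C * Real.exp (-x) * Real.exp x < L * Real.exp x :=
        mul_lt_mul_of_pos_right hL2 (Real.exp_pos x)
      rw [mul_assoc, ← Real.exp_add, neg_add_cancel, Real.exp_zero, mul_one] at h
      linarith
    calc Real.log (C / L) < Real.log (Real.exp x) :=
          Real.log_lt_log (by positivity) hce
      _ = x := Real.log_exp x
  have hls : limsup (fun ε : ℝ => ((ε ^ α : ℝ) : EReal) *
      ENNReal.log (P {ω | L < Real.sqrt ε * |Z ε ω|})) (nhdsWithin (0 : ℝ) (Ioi 0))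
      ≤ ((Real.log (C / L)) : EReal) := by
    apply limsup_le_of_le (by isBoundedDefault)
    filter_upwards [Ioo_mem_nhdsGT_of_mem (show (0:ℝ) ∈ Ico (0:ℝ) 1 by
      constructor <;> norm_num)] with ε hε
    exact stmt_11_aux P c κ₁ κ₂ hc hκ₂ Z hmeas hmom α hα0 hβ ε hε L hL1
  exact lt_of_le_of_lt hls (EReal.coe_lt_coe_iff.mpr hlogx)
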